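/- Let α ∈ (0,1) be irrational, with Gauss iterates α_0 := α, α_n := {1/α_{n-1}}, partial quotients a_n := ⌊1/α_{n-1}⌋, and convergent denominators q_n defined by q_{-1}=0, q_0=1, q_n = a_n·q_{n-1} + q_{n-2}. Let w > 1 be a real number and suppose there exists w' > w such that the inequality |α − p/q| < q^{−(w'+1)} holds for infinitely many reduced fractions p/q (p ∈ ℤ, q ≥ 1, gcd(p,q)=1). Then there exist infinitely many n with a_{n+1} ≥ q_n^{w−1}. -/

import Mathlib

noncomputable def gaussIter (α : ℝ) : ℕ → ℝ
  | 0 => α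
  | n + 1 => Int.fract (1 / gaussIter α n)

noncomputable def partialQuotient (α : ℝ) (n : ℤ) : ℤ :=
  ⌊1 / gaussIter α (n - 1).toNat⌋

section aux
variable {α : ℝ}

lemma gauss_props (hirr : Irrational α) (h0 : 0 < α) (h1 : α < 1) :
    ∀ n, Irrational (gaussIter α n) ∧ 0 < gaussIter α n ∧ gaussIter α n < 1 := by
  intro n
  induction n with
  | zero => exact ⟨hirr, h0, h1⟩
  | succ n ih =>
    obtain ⟨hi, hpos, hlt⟩ := ih
    have hinv : Irrational (1 / gaussIter α n) := by
      rw [one_div]; exact hi.inv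
    have hf : Irrational (gaussIter α (n + 1)) := by
      show Irrational (Int.fract (1 / gaussIter α n))
      unfold Int.fract
      exact hinv.sub_intCast _
    refine ⟨hf, ?_, Int.fract_lt_one _⟩
    exact lt_of_le_of_ne (Int.fract_nonneg _) (Ne.symm hf.ne_zero)

lemma pq_nat (n : ℕ) : partialQuotient α ((n : ℤ) + 1) = ⌊1 / gaussIter α n⌋ := by
  simp [partialQuotient]

lemma one_le_pq (hirr : Irrational α) (h0 : 0 < α) (h1 : α < 1) (n : ℕ) :
    1 ≤ ⌊1 / gaussIter α n⌋ := by
  obtain ⟨hi, hpos, hlt⟩ := gauss_props hirr h0 h1 n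
  have : (1 : ℝ) ≤ 1 / gaussIter α n := by
    rw [le_div_iff₀ hpos]; linarith
  exact_mod_cast Int.le_floor.mpr (by exact_mod_cast this)

open GenContFract in
lemma stream_eq (hirr : Irrational α) (h0 : 0 < α) (h1 : α < 1) :
    ∀ n, IntFractPair.stream α (n + 1)
      = some ⟨⌊1 / gaussIter α n⌋, gaussIter α (n + 1)⟩ ∧
      IntFractPair.stream α 0 = some ⟨0, α⟩ := by
  have base : IntFractPair.stream α 0 = some ⟨0, α⟩ := by
    rw [IntFractPair.stream_zero]
    unfold IntFractPair.of
    have hfl : ⌊α⌋ = 0 := Int.floor_eq_zero_iff.mpr ⟨h0.le, h1⟩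
    have hfr : Int.fract α = α := Int.fract_eq_self.mpr ⟨h0.le, h1⟩
    rw [hfl, hfr]
  intro n
  induction n with
  | zero =>
    refine ⟨?_, base⟩
    have hne : α ≠ 0 := (gauss_props hirr h0 h1 0).1.ne_zero
    rw [IntFractPair.stream_succ_of_some base hne]
    show some (IntFractPair.of α⁻¹) = _
    unfold IntFractPair.of
    rw [← one_div]
    rfl
  | succ n ih =>
    refine ⟨?_, base⟩
    have hne : gaussIter α (n + 1) ≠ 0 := (gauss_props hirr h0 h1 (n + 1)).1.ne_zero
    rw [IntFractPair.stream_succ_of_some ih.1 hne]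
    show some (IntFractPair.of (gaussIter α (n + 1))⁻¹) = _
    unfold IntFractPair.of
    rw [← one_div]
    rfl

end aux
/-- Integer continuants `(pₙ₋₁, qₙ₋₁)` of the continued fraction of `α`. -/
noncomputable def cfAux (α : ℝ) : ℕ → ℤ × ℤ
  | 0 => (1, 0)
  | 1 => (0, 1)
  | n + 2 => (⌊1 / gaussIter α n⌋ * (cfAux α (n + 1)).1 + (cfAux α n).1,
              ⌊1 / gaussIter α n⌋ * (cfAux α (n + 1)).2 + (cfAux α n).2)

section aux2
variable {α : ℝ}

lemma cfq_nonneg (hirr : Irrational α) (h0 : 0 < α) (h1 : α < 1) :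
    ∀ n, 0 ≤ (cfAux α n).2 ∧ 1 ≤ (cfAux α (n + 1)).2 := by
  intro n
  induction n with
  | zero => simp [cfAux]
  | succ n ih =>
    refine ⟨ih.2.trans' (by norm_num), ?_⟩
    show 1 ≤ ⌊1 / gaussIter α n⌋ * (cfAux α (n + 1)).2 + (cfAux α n).2
    have h := one_le_pq hirr h0 h1 n
    nlinarith [ih.1, ih.2]

lemma cfq_mono (hirr : Irrational α) (h0 : 0 < α) (h1 : α < 1) :
    Monotone (fun n => (cfAux α n).2) := by
  apply monotone_nat_of_le_succ
  intro n
  match n with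
  | 0 => simp [cfAux]
  | n + 1 =>
    show (cfAux α (n + 1)).2 ≤ ⌊1 / gaussIter α n⌋ * (cfAux α (n + 1)).2 + (cfAux α n).2
    have h := one_le_pq hirr h0 h1 n
    nlinarith [(cfq_nonneg hirr h0 h1 n).1, (cfq_nonneg hirr h0 h1 n).2]

/-- strict growth beyond any bound -/
lemma cfq_ge (hirr : Irrational α) (h0 : 0 < α) (h1 : α < 1) :
    ∀ n : ℕ, (n : ℤ) ≤ (cfAux α (n + 1)).2 := by
  intro n
  induction n using Nat.strong_induction_on with
  | _ n ih =>
    match n with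
    | 0 => simp [cfAux]
    | 1 =>
      have h := one_le_pq hirr h0 h1 0
      show ((1 : ℕ) : ℤ) ≤ (cfAux α 2).2
      have e : (cfAux α 2).2 = ⌊1 / gaussIter α 0⌋ * 1 + 0 := rfl
      rw [e]; push_cast; omega
    | n + 2 =>
      have h1' : ((n : ℤ) + 1) ≤ (cfAux α (n + 2)).2 := by
        have := ih (n + 1) (by omega); push_cast at this; convert this using 2 <;> omega
      have h0' : (1 : ℤ) ≤ (cfAux α (n + 1)).2 := (cfq_nonneg hirr h0 h1 n).2
      show ((n + 2 : ℕ) : ℤ) ≤ ⌊1 / gaussIter α (n + 1)⌋ * (cfAux α (n + 2)).2 + (cfAux α (n + 1)).2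
      have h := one_le_pq hirr h0 h1 (n + 1)
      push_cast
      nlinarith

lemma cf_coprime (hirr : Irrational α) (h0 : 0 < α) (h1 : α < 1) :
    ∀ n, (cfAux α (n + 1)).1 * (cfAux α n).2 - (cfAux α n).1 * (cfAux α (n + 1)).2
      = (-1) ^ (n + 1) := by
  intro n
  induction n with
  | zero => simp [cfAux]
  | succ n ih =>
    show (⌊1 / gaussIter α n⌋ * (cfAux α (n + 1)).1 + (cfAux α n).1) * (cfAux α (n + 1)).2
      - (cfAux α (n + 1)).1 * (⌊1 / gaussIter α n⌋ * (cfAux α (n + 1)).2 + (cfAux α n).2)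
      = (-1) ^ (n + 2)
    have : (-1 : ℤ) ^ (n + 2) = -(-1) ^ (n + 1) := by ring
    rw [this, ← ih]; ring

lemma cf_isCoprime (hirr : Irrational α) (h0 : 0 < α) (h1 : α < 1) (n : ℕ) :
    IsCoprime (cfAux α (n + 1)).1 (cfAux α (n + 1)).2 := by
  refine ⟨(-1) ^ (n + 1) * (cfAux α n).2, -((-1) ^ (n + 1) * (cfAux α n).1), ?_⟩
  have h := cf_coprime hirr h0 h1 n
  have h2 : ((-1 : ℤ) ^ (n + 1)) * ((-1 : ℤ) ^ (n + 1)) = 1 := by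
    rw [← pow_add]; exact (neg_one_pow_eq_one_iff_even (by norm_num)).mpr ⟨n + 1, rfl⟩
  calc (-1) ^ (n + 1) * (cfAux α n).2 * (cfAux α (n + 1)).1
        + -((-1) ^ (n + 1) * (cfAux α n).1) * (cfAux α (n + 1)).2
      = (-1) ^ (n + 1) * ((cfAux α (n + 1)).1 * (cfAux α n).2
          - (cfAux α n).1 * (cfAux α (n + 1)).2) := by ring
    _ = 1 := by rw [h, h2]

open GenContFract in
lemma contsAux_eq (hirr : Irrational α) (h0 : 0 < α) (h1 : α < 1) :
    ∀ n, (GenContFract.of α).contsAux n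
      = ⟨((cfAux α n).1 : ℝ), ((cfAux α n).2 : ℝ)⟩ := by
  intro n
  induction n using Nat.strong_induction_on with
  | _ n ih =>
    match n with
    | 0 => simp [cfAux, GenContFract.contsAux]
    | 1 =>
      show (GenContFract.of α).contsAux 1 = _
      rw [GenContFract.first_contAux_eq_h_one, GenContFract.of_h_eq_floor,
        Int.floor_eq_zero_iff.mpr ⟨h0.le, h1⟩]
      simp [cfAux]
    | n + 2 =>
      have hs : (GenContFract.of α).s.get? n = some ⟨1, ((⌊1 / gaussIter α n⌋ : ℤ) : ℝ)⟩ :=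
        GenContFract.get?_of_eq_some_of_succ_get?_intFractPair_stream
          (stream_eq hirr h0 h1 n).1
      show (GenContFract.of α).contsAux (n + 2) = _
      have : (GenContFract.of α).contsAux (n + 2)
          = nextConts 1 (⌊1 / gaussIter α n⌋ : ℝ) ((GenContFract.of α).contsAux n)
            ((GenContFract.of α).contsAux (n + 1)) := by
        simp [GenContFract.contsAux, hs]
      rw [this, ih (n + 1) (by omega), ih n (by omega)]
      unfold nextConts nextNum nextDen
      have e1 : (cfAux α (n + 2)).1
          = ⌊1 / gaussIter α n⌋ * (cfAux α (n + 1)).1 + (cfAux α n).1 := rfl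
      have e2 : (cfAux α (n + 2)).2
          = ⌊1 / gaussIter α n⌋ * (cfAux α (n + 1)).2 + (cfAux α n).2 := rfl
      rw [e1, e2]
      push_cast
      congr 1 <;> ring

end aux2
section aux3
variable {α : ℝ}

lemma dens_b_eq (hirr : Irrational α) (h0 : 0 < α) (h1 : α < 1) (n : ℕ) :
    ((GenContFract.of α).contsAux n).b = ((cfAux α n).2 : ℝ) := by
  rw [contsAux_eq hirr h0 h1 n]

lemma nums_a_eq (hirr : Irrational α) (h0 : 0 < α) (h1 : α < 1) (n : ℕ) :
    ((GenContFract.of α).contsAux n).a = ((cfAux α n).1 : ℝ) := by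
  rw [contsAux_eq hirr h0 h1 n]

lemma mk_rat (P Q : ℤ) (hQ : 1 ≤ Q) (hcop : Int.gcd P Q = 1) :
    ∃ r : ℚ, (r : ℝ) = (P : ℝ) / (Q : ℝ) ∧ r.num = P ∧ (r.den : ℤ) = Q := by
  have hden : Q.toNat ≠ 0 := by omega
  have hco : P.natAbs.Coprime Q.toNat := by
    have : Q.toNat = Q.natAbs := by omega
    rw [this]
    exact hcop
  refine ⟨⟨P, Q.toNat, hden, hco⟩, ?_, rfl, ?_⟩
  · rw [Rat.cast_def]
    have e1 : (⟨P, Q.toNat, hden, hco⟩ : ℚ).num = P := rfl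
    have e2 : (⟨P, Q.toNat, hden, hco⟩ : ℚ).den = Q.toNat := rfl
    rw [e1, e2]
    have e3 : ((Q.toNat : ℕ) : ℝ) = (Q : ℝ) := by
      exact_mod_cast congrArg (Int.cast : ℤ → ℝ) (Int.toNat_of_nonneg (by omega : (0:ℤ) ≤ Q))
    rw [e3]
  · show (Q.toNat : ℤ) = Q
    omega

lemma exists_large_den (h0 : 0 < α) (h1 : α < 1) {w' : ℝ} (hw' : 0 ≤ w' + 1)
    (hinf : {pq : ℤ × ℤ | 1 ≤ pq.2 ∧ Int.gcd pq.1 pq.2 = 1 ∧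
      |α - (pq.1 : ℝ) / (pq.2 : ℝ)| < (pq.2 : ℝ) ^ (-(w' + 1) : ℝ)}.Infinite) (C : ℤ) :
    ∃ pq : ℤ × ℤ, (1 ≤ pq.2 ∧ Int.gcd pq.1 pq.2 = 1 ∧
      |α - (pq.1 : ℝ) / (pq.2 : ℝ)| < (pq.2 : ℝ) ^ (-(w' + 1) : ℝ)) ∧ C < pq.2 := by
  by_contra hcon
  push_neg at hcon
  apply hinf
  apply Set.Finite.subset (Set.finite_Icc ((-(2 * C), 1) : ℤ × ℤ) ((2 * C, C) : ℤ × ℤ))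
  rintro ⟨P, Q⟩ hmem
  obtain ⟨hQ1, hg, hb⟩ := hmem
  have hQC : Q ≤ C := hcon (P, Q) ⟨hQ1, hg, hb⟩
  have hQ0 : (0 : ℝ) < (Q : ℝ) := by exact_mod_cast (by omega : (0:ℤ) < Q)
  have hQR : (1 : ℝ) ≤ (Q : ℝ) := by exact_mod_cast hQ1
  have hle1 : ((Q : ℝ)) ^ (-(w' + 1) : ℝ) ≤ 1 :=
    Real.rpow_le_one_of_one_le_of_nonpos hQR (by linarith)
  have habs : |α - (P : ℝ) / Q| < 1 := lt_of_lt_of_le hb hle1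
  have h2 : |(P : ℝ) / Q| < 2 := by
    have h3 := abs_sub_abs_le_abs_sub ((P : ℝ) / Q) α
    rw [abs_sub_comm] at h3
    have : |α| < 1 := abs_lt.mpr ⟨by linarith, h1⟩
    linarith
  have hPb : |(P : ℝ)| < 2 * Q := by
    rw [abs_div, abs_of_pos hQ0, div_lt_iff₀ hQ0] at h2
    linarith
  have hPi : |P| ≤ 2 * C := by
    have hQCr : (Q : ℝ) ≤ (C : ℝ) := by exact_mod_cast hQC
    have h4 : |(P : ℝ)| < 2 * (C : ℝ) := by linarith
    have h5 : |P| < 2 * C := by exact_mod_cast (by push_cast; exact h4 : ((|P| : ℤ) : ℝ) < ((2 * C : ℤ) : ℝ))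
    omega
  obtain ⟨hp1, hp2⟩ := abs_le.mp hPi
  rw [Set.mem_Icc]
  exact ⟨⟨hp1, hQ1⟩, ⟨hp2, hQC⟩⟩

end aux3
theorem stmt12 (α : ℝ) (hirr : Irrational α) (h0 : 0 < α) (h1 : α < 1)
    (q : ℤ → ℤ) (hqm1 : q (-1) = 0) (hq0 : q 0 = 1)
    (hq : ∀ n : ℤ, 1 ≤ n → q n = partialQuotient α n * q (n - 1) + q (n - 2))
    (w : ℝ) (hw : 1 < w)
    (happrox : ∃ w' : ℝ, w < w' ∧
      {pq : ℤ × ℤ | 1 ≤ pq.2 ∧ Int.gcd pq.1 pq.2 = 1 ∧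
        |α - (pq.1 : ℝ) / (pq.2 : ℝ)| < (pq.2 : ℝ) ^ (-(w' + 1) : ℝ)}.Infinite) :
    {n : ℕ | ((q (n : ℤ) : ℝ)) ^ (w - 1 : ℝ) ≤ (partialQuotient α ((n : ℤ) + 1) : ℝ)}.Infinite := by
  obtain ⟨w', hww', hinf⟩ := happrox
  have hw'1 : 1 < w' := lt_trans hw hww'
  -- bridge between `q` and the integer continuants
  have hbridge : ∀ m : ℕ, q (m : ℤ) = (cfAux α (m + 1)).2 := by
    intro m
    induction m using Nat.strong_induction_on with
    | _ m ih =>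
      match m with
      | 0 => simpa [cfAux] using hq0
      | m + 1 =>
        have h := hq ((m : ℤ) + 1) (by omega)
        have hgoal : q ((m : ℤ) + 1) = (cfAux α (m + 2)).2 := by
          rw [h, pq_nat m]
          have e1 : (m : ℤ) + 1 - 1 = (m : ℤ) := by ring
          have hprev : q ((m : ℤ) + 1 - 1) = (cfAux α (m + 1)).2 := by
            rw [e1]; exact ih m (by omega)
          have hprev2 : q ((m : ℤ) + 1 - 2) = (cfAux α m).2 := by
            match m with
            | 0 => show q (-1) = 0; exact hqm1
            | k + 1 =>
              have e2 : ((k + 1 : ℕ) : ℤ) + 1 - 2 = (k : ℤ) := by push_cast; ring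
              rw [e2]; exact ih k (by omega)
          rw [hprev, hprev2]
          rfl
        push_cast
        exact hgoal
  rw [← Nat.frequently_atTop_iff_infinite, Filter.frequently_atTop]
  intro N
  set C : ℤ := max (max ⌈(2:ℝ) ^ ((w' - 1)⁻¹ : ℝ)⌉ ⌈(3:ℝ) ^ ((w' - w)⁻¹ : ℝ)⌉)
    (max ((cfAux α (N + 2)).2) 1) with hC
  obtain ⟨⟨P, Q⟩, ⟨hQ1, hg, hb⟩, hQC⟩ := exists_large_den h0 h1 (by linarith) hinf C
  simp only at hQ1 hg hb hQC
  have hx0 : (0:ℝ) < (Q:ℝ) := by exact_mod_cast (by omega : (0:ℤ) < Q)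
  have hx1 : (1:ℝ) ≤ (Q:ℝ) := by exact_mod_cast hQ1
  have hCx : ((C : ℤ):ℝ) < (Q:ℝ) := by exact_mod_cast hQC
  have hx2 : (2:ℝ) ^ ((w' - 1)⁻¹ : ℝ) ≤ (Q:ℝ) := by
    refine le_trans (Int.le_ceil _) (le_of_lt (lt_of_le_of_lt ?_ hCx))
    exact_mod_cast le_trans (le_max_left _ _) (le_max_left _ _)
  have hx3 : (3:ℝ) ^ ((w' - w)⁻¹ : ℝ) ≤ (Q:ℝ) := by
    refine le_trans (Int.le_ceil _) (le_of_lt (lt_of_le_of_lt ?_ hCx))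
    exact_mod_cast le_trans (le_max_right _ _) (le_max_left _ _)
  have hpow2 : (2:ℝ) ≤ (Q:ℝ) ^ (w' - 1 : ℝ) := by
    calc (2:ℝ) = ((2:ℝ) ^ ((w' - 1)⁻¹ : ℝ)) ^ (w' - 1 : ℝ) := by
          rw [← Real.rpow_mul (by norm_num : (0:ℝ) ≤ 2),
            inv_mul_cancel₀ (by linarith : w' - 1 ≠ 0), Real.rpow_one]
      _ ≤ _ := Real.rpow_le_rpow (Real.rpow_nonneg (by norm_num) _) hx2 (by linarith)
  have hpow3 : (3:ℝ) ≤ (Q:ℝ) ^ (w' - w : ℝ) := by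
    calc (3:ℝ) = ((3:ℝ) ^ ((w' - w)⁻¹ : ℝ)) ^ (w' - w : ℝ) := by
          rw [← Real.rpow_mul (by norm_num : (0:ℝ) ≤ 3),
            inv_mul_cancel₀ (by linarith : w' - w ≠ 0), Real.rpow_one]
      _ ≤ _ := Real.rpow_le_rpow (Real.rpow_nonneg (by norm_num) _) hx3 (by linarith)
  -- Legendre
  obtain ⟨r, hr, hrnum, hrden⟩ := mk_rat P Q hQ1 hg
  have hrdenR : ((r.den : ℕ) : ℝ) = (Q:ℝ) := by exact_mod_cast congrArg (Int.cast : ℤ → ℝ) hrden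
  have hleg : |α - (r:ℝ)| < 1 / (2 * ((r.den : ℕ):ℝ) ^ 2) := by
    rw [hr, hrdenR]
    refine lt_of_lt_of_le hb ?_
    have h2R : (Q:ℝ) ^ ((2:ℝ) : ℝ) = (Q:ℝ) ^ 2 := by
      rw [show ((2:ℝ):ℝ) = ((2:ℕ):ℝ) by norm_num, Real.rpow_natCast]
    have hsplit : (Q:ℝ) ^ (w' + 1 : ℝ) = (Q:ℝ) ^ (w' - 1 : ℝ) * (Q:ℝ) ^ 2 := by
      rw [← h2R, ← Real.rpow_add hx0]; congr 1; ring
    have hx2pos : (0:ℝ) < (Q:ℝ) ^ 2 := by positivity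
    have hge : 2 * (Q:ℝ) ^ 2 ≤ (Q:ℝ) ^ (w' + 1 : ℝ) := by
      rw [hsplit]; nlinarith
    rw [Real.rpow_neg hx0.le, inv_eq_one_div]
    exact one_div_le_one_div_of_le (by positivity) hge
  obtain ⟨n, hconv⟩ := Real.exists_convs_eq_rat hleg
  -- identify the approximating fraction with the n-th convergent
  have hqq1 : 1 ≤ (cfAux α (n + 1)).2 := (cfq_nonneg hirr h0 h1 n).2
  have hconv2 : (GenContFract.of α).convs n
      = ((cfAux α (n + 1)).1 : ℝ) / ((cfAux α (n + 1)).2 : ℝ) := by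
    rw [GenContFract.conv_eq_num_div_den, GenContFract.num_eq_conts_a,
      GenContFract.den_eq_conts_b, GenContFract.nth_cont_eq_succ_nth_contAux,
      nums_a_eq hirr h0 h1 (n + 1), dens_b_eq hirr h0 h1 (n + 1)]
  have hqq0R : (0:ℝ) < ((cfAux α (n + 1)).2 : ℝ) := by
    exact_mod_cast (by omega : (0:ℤ) < (cfAux α (n + 1)).2)
  have hPQ : (P:ℝ) / (Q:ℝ) = ((cfAux α (n + 1)).1 : ℝ) / ((cfAux α (n + 1)).2 : ℝ) := by
    rw [← hr, ← hconv2, hconv]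
  have hcross : P * (cfAux α (n + 1)).2 = (cfAux α (n + 1)).1 * Q := by
    have := (div_eq_div_iff hx0.ne' hqq0R.ne').mp hPQ
    exact_mod_cast this
  have hcopPQ : IsCoprime P Q := Int.isCoprime_iff_gcd_eq_one.mpr hg
  have hcoppq : IsCoprime (cfAux α (n + 1)).1 (cfAux α (n + 1)).2 := cf_isCoprime hirr h0 h1 n
  have hd1 : Q ∣ (cfAux α (n + 1)).2 :=
    (hcopPQ.symm).dvd_of_dvd_mul_left ⟨(cfAux α (n + 1)).1, by rw [hcross]; ring⟩
  have hd2 : (cfAux α (n + 1)).2 ∣ Q :=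
    (hcoppq.symm).dvd_of_dvd_mul_left ⟨P, by rw [← hcross]; ring⟩
  have hQqq : (cfAux α (n + 1)).2 = Q := Int.dvd_antisymm (by omega) (by omega) hd2 hd1
  -- the found index is large
  have hn_gt : N < n := by
    by_contra hle
    push_neg at hle
    have h5 : (cfAux α (n + 1)).2 ≤ (cfAux α (N + 2)).2 :=
      cfq_mono hirr h0 h1 (by omega : n + 1 ≤ N + 2)
    have h6 : (cfAux α (N + 2)).2 ≤ C := le_trans (le_max_left _ _) (le_max_right _ _)
    omega
  -- exact error formula and lower bound
  have hstream : ∃ b : ℤ, GenContFract.IntFractPair.stream α n = some ⟨b, gaussIter α n⟩ := by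
    match n with
    | 0 => exact ⟨0, (stream_eq hirr h0 h1 0).2⟩
    | n + 1 => exact ⟨_, (stream_eq hirr h0 h1 n).1⟩
  obtain ⟨b, hstr⟩ := hstream
  have herr := GenContFract.sub_convs_eq hstr
  obtain ⟨ht_irr, ht0, ht1⟩ := gauss_props hirr h0 h1 n
  have htne : gaussIter α n ≠ 0 := ht_irr.ne_zero
  simp only [if_neg htne, dens_b_eq hirr h0 h1 (n + 1), dens_b_eq hirr h0 h1 n, hconv2] at herr
  rw [hQqq] at herr
  have ha1 : (1:ℝ) ≤ ((⌊1 / gaussIter α n⌋ : ℤ) : ℝ) := by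
    exact_mod_cast one_le_pq hirr h0 h1 n
  have htinv : (gaussIter α n)⁻¹ < ((⌊1 / gaussIter α n⌋ : ℤ) : ℝ) + 1 := by
    rw [inv_eq_one_div]
    exact_mod_cast Int.lt_floor_add_one (1 / gaussIter α n)
  set a : ℝ := ((⌊1 / gaussIter α n⌋ : ℤ) : ℝ) with ha_def
  have htinv0 : (0:ℝ) < (gaussIter α n)⁻¹ := by positivity
  have hpB0 : (0:ℝ) ≤ ((cfAux α n).2 : ℝ) := by
    exact_mod_cast (cfq_nonneg hirr h0 h1 n).1
  have hpBle : ((cfAux α n).2 : ℝ) ≤ (Q:ℝ) := by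
    have h9 : (cfAux α n).2 ≤ (cfAux α (n + 1)).2 := cfq_mono hirr h0 h1 (Nat.le_succ n)
    rw [hQqq] at h9
    exact_mod_cast h9
  set D : ℝ := (Q:ℝ) * ((gaussIter α n)⁻¹ * (Q:ℝ) + ((cfAux α n).2 : ℝ)) with hD_def
  have hDpos : (0:ℝ) < D := by
    apply mul_pos hx0
    have h10 : (0:ℝ) < (gaussIter α n)⁻¹ * (Q:ℝ) := mul_pos htinv0 hx0
    linarith
  have hDle : D ≤ 3 * a * ((Q:ℝ) * (Q:ℝ)) := by
    rw [hD_def]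
    nlinarith
  have habs_err : |α - (P:ℝ) / (Q:ℝ)| = 1 / D := by
    have hPQ' : (P:ℝ) / (Q:ℝ) = ((cfAux α (n + 1)).1 : ℝ) / (Q:ℝ) := by
      rw [hPQ, hQqq]
    rw [hPQ', herr, abs_div, abs_pow, abs_neg, abs_one, one_pow, abs_of_pos hDpos]
  have hb' : 1 / D < (Q:ℝ) ^ (-(w' + 1) : ℝ) := by rw [← habs_err]; exact hb
  have hDgt : (Q:ℝ) ^ (w' + 1 : ℝ) < D := by
    rw [Real.rpow_neg hx0.le, ← one_div] at hb'
    exact lt_of_one_div_lt_one_div hDpos hb'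
  have hsplit2 : (Q:ℝ) ^ (w' + 1 : ℝ)
      = (Q:ℝ) ^ (w' - w : ℝ) * ((Q:ℝ) ^ (w - 1 : ℝ) * ((Q:ℝ) * (Q:ℝ))) := by
    have hxx : (Q:ℝ) * (Q:ℝ) = (Q:ℝ) ^ ((2:ℕ) : ℝ) := by
      rw [Real.rpow_natCast]; ring
    rw [hxx, ← Real.rpow_add hx0, ← Real.rpow_add hx0]
    congr 1
    push_cast
    ring
  have hw1pos : (0:ℝ) < (Q:ℝ) ^ (w - 1 : ℝ) := Real.rpow_pos_of_pos hx0 _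
  have key : (Q:ℝ) ^ (w - 1 : ℝ) < a := by
    have h7 : 3 * ((Q:ℝ) ^ (w - 1 : ℝ) * ((Q:ℝ) * (Q:ℝ)))
        ≤ (Q:ℝ) ^ (w' - w : ℝ) * ((Q:ℝ) ^ (w - 1 : ℝ) * ((Q:ℝ) * (Q:ℝ))) := by
      apply mul_le_mul_of_nonneg_right hpow3
      positivity
    rw [← hsplit2] at h7
    have h8 : 3 * ((Q:ℝ) ^ (w - 1 : ℝ) * ((Q:ℝ) * (Q:ℝ))) < 3 * a * ((Q:ℝ) * (Q:ℝ)) :=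
      lt_of_le_of_lt h7 (lt_of_lt_of_le hDgt hDle)
    have h9 : (0:ℝ) < 3 * ((Q:ℝ) * (Q:ℝ)) := by positivity
    exact (mul_lt_mul_iff_left₀ h9).mp (by linarith)
  refine ⟨n, le_of_lt hn_gt, ?_⟩
  show ((q (n : ℤ) : ℤ) : ℝ) ^ (w - 1 : ℝ) ≤ ((partialQuotient α ((n : ℤ) + 1) : ℤ) : ℝ)
  rw [hbridge n, hQqq, pq_nat n]
  exact le_of_lt key
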